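/- Let σ₁, σ₂ be positive with σ₁ ≤ σ₂, let σ_∞ : [0,∞) → [σ₁,σ₂] be continuous, and define σ̄(t) := √((1/t)∫₀^t σ_∞(s)² ds). Then for all 0 < r < t with r ≤ t/2: |σ̄^r(t−r)·√(t−r)/(σ̄(t)·√t) − 1| ≤ (σ₂²/σ₁²)·(r/(t−r)) + (σ₂/σ₁)·(r/t) ≤ 4(σ₂²/σ₁²)·(r/t), where σ̄^r(u) := √((1/u)∫₀^u σ_∞(r+s)² ds). -/

import Mathlib

open Real Set


private lemma stmt_18_aux (σ₁ σ₂ r t I0r Irt I0t a b : ℝ)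
    (hσ₁ : 0 < σ₁) (hσ₂ : 0 < σ₂) (hσ₁₂ : σ₁ ≤ σ₂)
    (hr : 0 < r) (hrt : r < t) (hrt2 : r ≤ t / 2)
    (hsplit : I0r + Irt = I0t)
    (hI0rhi : I0r ≤ σ₂ ^ 2 * r) (hI0tlo : σ₁ ^ 2 * t ≤ I0t)
    (ha0 : 0 ≤ a) (hb0 : 0 < b)
    (ha2 : a ^ 2 = Irt) (hb2 : b ^ 2 = I0t) (hab : a ≤ b) :
    |a / b - 1| ≤ (σ₂ ^ 2 / σ₁ ^ 2) * (r / (t - r)) + (σ₂ / σ₁) * (r / t) ∧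
    (σ₂ ^ 2 / σ₁ ^ 2) * (r / (t - r)) + (σ₂ / σ₁) * (r / t)
        ≤ 4 * (σ₂ ^ 2 / σ₁ ^ 2) * (r / t) := by
  have ht : 0 < t := hr.trans hrt
  have htr : 0 < t - r := by linarith
  constructor
  · have habs : |a / b - 1| = (b - a) / b := by
      rw [abs_of_nonpos (by
        have : a / b ≤ 1 := (div_le_one hb0).mpr hab
        linarith)]
      field_simp
      ring
    rw [habs]
    have hkey : (b - a) * b ≤ I0r := by nlinarith
    have hstep : (b - a) / b ≤ σ₂ ^ 2 * r / (σ₁ ^ 2 * t) := by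
      rw [div_le_div_iff₀ hb0 (by positivity)]
      nlinarith [mul_nonneg (sub_nonneg.mpr hab) (sub_nonneg.mpr hI0tlo),
        mul_le_mul_of_nonneg_right hkey hb0.le,
        mul_le_mul_of_nonneg_right hI0rhi hb0.le]
    have hstep2 : σ₂ ^ 2 * r / (σ₁ ^ 2 * t) ≤ (σ₂ ^ 2 / σ₁ ^ 2) * (r / (t - r)) := by
      have h1 : σ₂ ^ 2 * r / (σ₁ ^ 2 * t) = (σ₂ ^ 2 / σ₁ ^ 2) * (r / t) := by
        field_simp
      rw [h1]
      exact mul_le_mul_of_nonneg_left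
        (div_le_div_of_nonneg_left hr.le htr (by linarith)) (by positivity)
    have hpos : 0 ≤ (σ₂ / σ₁) * (r / t) := by positivity
    linarith
  · have hX1 : 1 ≤ σ₂ ^ 2 / σ₁ ^ 2 := by
      rw [le_div_iff₀ (by positivity)]
      nlinarith
    have hY : σ₂ / σ₁ ≤ σ₂ ^ 2 / σ₁ ^ 2 := by
      rw [div_le_div_iff₀ hσ₁ (by positivity)]
      nlinarith [mul_le_mul_of_nonneg_left hσ₁₂ (mul_pos hσ₁ hσ₂).le]
    have hd : r / (t - r) ≤ 2 * (r / t) := by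
      rw [div_le_iff₀ htr]
      have h2 : 2 * (r / t) * (t - r) = 2 * r * (t - r) / t := by ring
      rw [h2, le_div_iff₀ ht]
      nlinarith
    have hrt0 : 0 ≤ r / t := by positivity
    nlinarith [mul_le_mul_of_nonneg_left hd (by positivity : (0:ℝ) ≤ σ₂ ^ 2 / σ₁ ^ 2),
      mul_le_mul_of_nonneg_right hY hrt0]

/-- comparison between the averaged diffusion coefficients
started at times `0` and `r`. -/
theorem stmt_18 (σ₁ σ₂ : ℝ) (hσ₁ : 0 < σ₁) (hσ₂ : 0 < σ₂) (hσ₁₂ : σ₁ ≤ σ₂)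
    (σinf : ℝ → ℝ) (hcont : ContinuousOn σinf (Ici 0))
    (hrange : ∀ s, 0 ≤ s → σinf s ∈ Icc σ₁ σ₂) :
    let σbar : ℝ → ℝ := fun t => Real.sqrt ((1 / t) * ∫ s in (0:ℝ)..t, σinf s ^ 2)
    let σbarr : ℝ → ℝ → ℝ := fun r u => Real.sqrt ((1 / u) * ∫ s in (0:ℝ)..u, σinf (r + s) ^ 2)
    ∀ r t : ℝ, 0 < r → r < t → r ≤ t / 2 →
      |σbarr r (t - r) * Real.sqrt (t - r) / (σbar t * Real.sqrt t) - 1|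
          ≤ (σ₂ ^ 2 / σ₁ ^ 2) * (r / (t - r)) + (σ₂ / σ₁) * (r / t) ∧
      (σ₂ ^ 2 / σ₁ ^ 2) * (r / (t - r)) + (σ₂ / σ₁) * (r / t)
          ≤ 4 * (σ₂ ^ 2 / σ₁ ^ 2) * (r / t) := by
  intro σbar σbarr r t hr hrt hrt2
  have ht : 0 < t := hr.trans hrt
  have htr : 0 < t - r := by linarith
  -- integrability of σinf ^ 2 on subintervals of [0, ∞)
  have hint : ∀ a b : ℝ, 0 ≤ a → a ≤ b →
      IntervalIntegrable (fun s => σinf s ^ 2) MeasureTheory.volume a b := by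
    intro a b ha hab
    apply ContinuousOn.intervalIntegrable
    apply (hcont.pow 2).mono
    rw [uIcc_of_le hab]
    intro x hx
    exact le_trans ha hx.1
  have hI0rI := hint 0 r le_rfl hr.le
  have hIrtI := hint r t hr.le hrt.le
  have hI0tI := hint 0 t le_rfl ht.le
  set I0r := ∫ s in (0:ℝ)..r, σinf s ^ 2 with hI0rdef
  set Irt := ∫ s in r..t, σinf s ^ 2 with hIrtdef
  set I0t := ∫ s in (0:ℝ)..t, σinf s ^ 2 with hI0tdef
  have hsplit : I0r + Irt = I0t :=
    intervalIntegral.integral_add_adjacent_intervals hI0rI hIrtI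
  -- lower and upper bounds for the integrals
  have hboundlo : ∀ a b : ℝ, 0 ≤ a → a ≤ b →
      σ₁ ^ 2 * (b - a) ≤ ∫ s in a..b, σinf s ^ 2 := by
    intro a b ha hab
    have h := intervalIntegral.integral_mono_on hab (intervalIntegrable_const (c := σ₁ ^ 2))
      (hint a b ha hab) (fun x hx => by
        have hx0 : 0 ≤ x := le_trans ha hx.1
        have h2 := hrange x hx0
        nlinarith [h2.1, h2.2])
    simpa [mul_comm] using h
  have hboundhi : ∀ a b : ℝ, 0 ≤ a → a ≤ b →
      (∫ s in a..b, σinf s ^ 2) ≤ σ₂ ^ 2 * (b - a) := by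
    intro a b ha hab
    have h := intervalIntegral.integral_mono_on hab (hint a b ha hab)
      (intervalIntegrable_const (c := σ₂ ^ 2)) (fun x hx => by
        have hx0 : 0 ≤ x := le_trans ha hx.1
        have h2 := hrange x hx0
        nlinarith [h2.1, h2.2])
    simpa [mul_comm] using h
  have hIrtlo : σ₁ ^ 2 * (t - r) ≤ Irt := hboundlo r t hr.le hrt.le
  have hI0tlo : σ₁ ^ 2 * t ≤ I0t := by simpa using hboundlo 0 t le_rfl ht.le
  have hI0rhi : I0r ≤ σ₂ ^ 2 * r := by simpa using hboundhi 0 r le_rfl hr.le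
  have hI0rlo : 0 ≤ I0r := by
    have := hboundlo 0 r le_rfl hr.le
    nlinarith
  have hIrt0 : 0 ≤ Irt := by nlinarith [mul_pos (pow_pos hσ₁ 2) htr]
  have hI0t0 : 0 ≤ I0t := by nlinarith [mul_pos (pow_pos hσ₁ 2) ht]
  -- substitution in the shifted integral
  have hshift : (∫ s in (0:ℝ)..(t - r), σinf (r + s) ^ 2) = Irt := by
    have h := intervalIntegral.integral_comp_add_left (a := (0:ℝ)) (b := t - r)
      (fun s => σinf s ^ 2) r
    simpa using h
  -- the two key products are square roots of the integrals
  have hA : σbarr r (t - r) * Real.sqrt (t - r) = Real.sqrt Irt := by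
    show Real.sqrt ((1 / (t - r)) * ∫ s in (0:ℝ)..(t - r), σinf (r + s) ^ 2)
        * Real.sqrt (t - r) = Real.sqrt Irt
    rw [hshift, ← Real.sqrt_mul (by positivity)]
    congr 1
    field_simp
  have hB : σbar t * Real.sqrt t = Real.sqrt I0t := by
    show Real.sqrt ((1 / t) * I0t) * Real.sqrt t = Real.sqrt I0t
    rw [← Real.sqrt_mul (by positivity)]
    congr 1
    field_simp
  set a := Real.sqrt Irt with hadef
  set b := Real.sqrt I0t with hbdef
  have ha0 : 0 ≤ a := Real.sqrt_nonneg _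
  have hb0 : 0 < b := Real.sqrt_pos.mpr (by nlinarith [mul_pos (pow_pos hσ₁ 2) ht])
  have ha2 : a ^ 2 = Irt := Real.sq_sqrt hIrt0
  have hb2 : b ^ 2 = I0t := Real.sq_sqrt hI0t0
  have hab : a ≤ b := Real.sqrt_le_sqrt (by nlinarith)
  clear_value a b
  clear hadef hbdef
  clear_value I0r Irt I0t
  rw [hA, hB]
  exact stmt_18_aux σ₁ σ₂ r t I0r Irt I0t a b hσ₁ hσ₂ hσ₁₂ hr hrt hrt2 hsplit
    hI0rhi hI0tlo ha0 hb0 ha2 hb2 hab
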